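/- Let G₁ and G₂ be groups acting on connected topological spaces X₁ and X₂ respectively, by homeomorphisms. If the transformation groupoids X₁ ⋊ G₁ and X₂ ⋊ G₂ are isomorphic as topological groupoids, then G₁ ≅ G₂ as groups. -/
import Mathlib

/-- A continuous map from a preconnected space to a discrete space is constant. -/
lemma const_of_discrete {X Y : Type*} [TopologicalSpace X] [PreconnectedSpace X]
    [TopologicalSpace Y] [DiscreteTopology Y] {f : X → Y} (hf : Continuous f) (x y : X) :
    f x = f y :=
  ((IsLocallyConstant.iff_continuous f).2 hf).apply_eq_of_preconnectedSpace x y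

/-- If the transformation groupoids `X₁ ⋊ G₁` and `X₂ ⋊ G₂` of actions
of groups `Gᵢ` on connected spaces `Xᵢ` by homeomorphisms are isomorphic as topological
groupoids — i.e. there are a homeomorphism `F` of arrow spaces and a homeomorphism `f` of
object spaces compatible with range, source, and composition — then `G₁ ≅ G₂`. -/
theorem group_iso_of_transformation_groupoid_iso
    {X₁ G₁ X₂ G₂ : Type*}
    [TopologicalSpace X₁] [ConnectedSpace X₁] [TopologicalSpace G₁] [DiscreteTopology G₁]
    [Group G₁] [MulAction G₁ X₁] [ContinuousConstSMul G₁ X₁]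
    [TopologicalSpace X₂] [ConnectedSpace X₂] [TopologicalSpace G₂] [DiscreteTopology G₂]
    [Group G₂] [MulAction G₂ X₂] [ContinuousConstSMul G₂ X₂]
    (F : (X₁ × G₁) ≃ₜ (X₂ × G₂)) (f : X₁ ≃ₜ X₂)
    (hrange : ∀ p : X₁ × G₁, (F p).1 = f p.1)
    (hsource : ∀ p : X₁ × G₁, (F p).2⁻¹ • (F p).1 = f (p.2⁻¹ • p.1))
    (hcomp : ∀ (x : X₁) (g h : G₁),
      F (x, g * h) = ((F (x, g)).1, (F (x, g)).2 * (F (g⁻¹ • x, h)).2)) :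
    Nonempty (G₁ ≃* G₂) := by
  obtain ⟨x₀⟩ : Nonempty X₁ := inferInstance
  obtain ⟨y₀⟩ : Nonempty X₂ := inferInstance
  have hconst : ∀ (g : G₁) (x y : X₁), (F (x, g)).2 = (F (y, g)).2 := fun g x y =>
    const_of_discrete (continuous_snd.comp
      (F.continuous.comp (continuous_id.prodMk continuous_const))) x y
  have hconst' : ∀ (k : G₂) (y y' : X₂), (F.symm (y, k)).2 = (F.symm (y', k)).2 := fun k y y' =>
    const_of_discrete (continuous_snd.comp
      (F.symm.continuous.comp (continuous_id.prodMk continuous_const))) y y'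
  set φ : G₁ → G₂ := fun g => (F (x₀, g)).2 with hφ
  have hFform : ∀ (x : X₁) (g : G₁), F (x, g) = (f x, φ g) := fun x g =>
    Prod.ext (hrange (x, g)) (hconst g x x₀)
  have hmul : ∀ g h : G₁, φ (g * h) = φ g * φ h := by
    intro g h
    have := congrArg Prod.snd (hcomp x₀ g h)
    simp only [hφ] at this ⊢
    rw [this, hconst h (g⁻¹ • x₀) x₀]
  have hli : ∀ g : G₁, (F.symm (y₀, φ g)).2 = g := by
    intro g
    have : F.symm (f x₀, φ g) = (x₀, g) := by
      rw [← hFform x₀ g, F.symm_apply_apply]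
    rw [hconst' (φ g) y₀ (f x₀), this]
  have hinj : Function.Injective φ := fun g g' h => by
    have := hli g
    rw [h, hli g'] at this
    exact this.symm
  have hsurj : Function.Surjective φ := by
    intro k
    refine ⟨(F.symm (y₀, k)).2, ?_⟩
    have h1 : F ((F.symm (y₀, k)).1, (F.symm (y₀, k)).2) = (y₀, k) := by
      rw [Prod.mk.eta, F.apply_symm_apply]
    rw [hFform] at h1
    exact (congrArg Prod.snd h1)
  exact ⟨MulEquiv.ofBijective (MonoidHom.mk' φ hmul) ⟨hinj, hsurj⟩⟩
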